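/- Let H(s)=(A₀+s)²−1 with A₀ ∈ [−1,0] and let 0 < h₁ < h₀. Suppose ρ₀, ρ₁ solve ρᵢ' = (H−ρᵢ²)/hᵢ with ρᵢ(0)=0, and both satisfy ρᵢ' ≤ 0, −s < ρᵢ(s) < 0, and ρᵢ(s)+√(H(s)) → 0 as s → ∞. Then a contradiction follows; i.e., there is at most one h > 0 for which the solution of the Riccati equation with ρ(0)=0 stays in the strip −s < ρ < 0 with ρ' ≤ 0 and ρ+√H → 0. -/

import Mathlib

open Set Filter

/-- Uniqueness of the critical slope h₀: two distinct values h₁ < h₀ cannot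
both yield Riccati solutions staying in the strip with ρ + √H → 0. -/
theorem stmt_5 (A₀ h₀ h₁ : ℝ) (hA : A₀ ∈ Icc (-1:ℝ) 0)
    (hh₁ : 0 < h₁) (hlt : h₁ < h₀)
    (ρ₀ ρ₁ : ℝ → ℝ) (hρ₀0 : ρ₀ 0 = 0) (hρ₁0 : ρ₁ 0 = 0)
    (hode₀ : ∀ s ∈ Ici (0:ℝ),
      HasDerivAt ρ₀ (((A₀ + s)^2 - 1 - (ρ₀ s)^2) / h₀) s)
    (hode₁ : ∀ s ∈ Ici (0:ℝ),
      HasDerivAt ρ₁ (((A₀ + s)^2 - 1 - (ρ₁ s)^2) / h₁) s)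
    (hdec₀ : ∀ s ∈ Ici (0:ℝ), deriv ρ₀ s ≤ 0)
    (hdec₁ : ∀ s ∈ Ici (0:ℝ), deriv ρ₁ s ≤ 0)
    (hstrip₀ : ∀ s ∈ Ioi (0:ℝ), -s < ρ₀ s ∧ ρ₀ s < 0)
    (hstrip₁ : ∀ s ∈ Ioi (0:ℝ), -s < ρ₁ s ∧ ρ₁ s < 0)
    (hlim₀ : Tendsto (fun s => ρ₀ s + Real.sqrt ((A₀ + s)^2 - 1)) atTop (nhds 0))
    (hlim₁ : Tendsto (fun s => ρ₁ s + Real.sqrt ((A₀ + s)^2 - 1)) atTop (nhds 0)) :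
    False := by
  have hh₀ : (0:ℝ) < h₀ := hh₁.trans hlt
  -- continuous modification of ρ₀ + ρ₁
  set f : ℝ → ℝ := fun t => ρ₀ (max t 0) + ρ₁ (max t 0) with hf_def
  have hcf : Continuous f := by
    rw [continuous_iff_continuousAt]
    intro t
    have hmax : ContinuousAt (fun t : ℝ => max t 0) t :=
      (continuous_id.max continuous_const).continuousAt
    have h0' : (0:ℝ) ≤ max t 0 := le_max_right _ _
    have c0 : ContinuousAt ρ₀ (max t 0) := (hode₀ _ h0').continuousAt
    have c1 : ContinuousAt ρ₁ (max t 0) := (hode₁ _ h0').continuousAt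
    have d0 : ContinuousAt (ρ₀ ∘ fun t : ℝ => max t 0) t := ContinuousAt.comp (f := fun t : ℝ => max t 0) c0 hmax
    have d1 : ContinuousAt (ρ₁ ∘ fun t : ℝ => max t 0) t := ContinuousAt.comp (f := fun t : ℝ => max t 0) c1 hmax
    exact d0.add d1
  -- primitive of f
  set Q : ℝ → ℝ := fun s => ∫ t in (0:ℝ)..s, f t with hQ_def
  have hQder : ∀ s : ℝ, HasDerivAt Q (f s) s := by
    intro s
    exact intervalIntegral.integral_hasDerivAt_right
      (hcf.intervalIntegrable _ _) (hcf.stronglyMeasurableAtFilter _ _)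
      hcf.continuousAt
  -- δ = ρ₁ - ρ₀ ; ψ = δ * exp (Q / h₀)
  set δ : ℝ → ℝ := fun s => ρ₁ s - ρ₀ s with hδ_def
  set ψ : ℝ → ℝ := fun s => δ s * Real.exp (Q s / h₀) with hψ_def
  have hδder : ∀ s ∈ Ici (0:ℝ), HasDerivAt δ
      ((((A₀ + s)^2 - 1 - (ρ₁ s)^2) / h₁) - (((A₀ + s)^2 - 1 - (ρ₀ s)^2) / h₀)) s :=
    fun s hs => (hode₁ s hs).sub (hode₀ s hs)
  have hEder : ∀ s : ℝ, HasDerivAt (fun s => Real.exp (Q s / h₀))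
      (Real.exp (Q s / h₀) * (f s / h₀)) s := by
    intro s
    exact (((hQder s).div_const h₀).exp)
  have hψder : ∀ s ∈ Ici (0:ℝ), HasDerivAt ψ
      (((((A₀ + s)^2 - 1 - (ρ₁ s)^2) / h₁) - (((A₀ + s)^2 - 1 - (ρ₀ s)^2) / h₀))
          * Real.exp (Q s / h₀)
        + δ s * (Real.exp (Q s / h₀) * (f s / h₀))) s :=
    fun s hs => (hδder s hs).mul (hEder s)
  -- key: ρ₁' ≤ 0 means H - ρ₁² ≤ 0 on Ici 0
  have hH₁ : ∀ s ∈ Ici (0:ℝ), (A₀ + s)^2 - 1 - (ρ₁ s)^2 ≤ 0 := by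
    intro s hs
    have hd := (hode₁ s hs).deriv
    have h2 := hdec₁ s hs
    rw [hd] at h2
    have h3 : ((A₀ + s)^2 - 1 - (ρ₁ s)^2)
        = (((A₀ + s)^2 - 1 - (ρ₁ s)^2) / h₁) * h₁ := (div_mul_cancel₀ _ hh₁.ne').symm
    nlinarith [mul_nonneg (neg_nonneg.mpr h2) hh₁.le]
  -- comparison of the two divisions
  have h1 : ∀ s ∈ Ici (0:ℝ), ((A₀ + s)^2 - 1 - (ρ₁ s)^2) / h₁
      ≤ ((A₀ + s)^2 - 1 - (ρ₁ s)^2) / h₀ := by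
    intro s hs
    rw [div_eq_mul_inv, div_eq_mul_inv]
    exact mul_le_mul_of_nonpos_left (by
      exact inv_anti₀ hh₁ hlt.le) (hH₁ s hs)
  -- ψ' ≤ 0 on Ioi 0
  have hψ'le : ∀ s ∈ Ioi (0:ℝ), deriv ψ s ≤ 0 := by
    intro s hs
    have hs' : s ∈ Ici (0:ℝ) := mem_Ici.mpr (le_of_lt (mem_Ioi.mp hs))
    rw [(hψder s hs').deriv]
    have hfs : f s = ρ₀ s + ρ₁ s := by
      simp only [hf_def, max_eq_left (le_of_lt (show (0:ℝ) < s from hs))]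
    have hE : (0:ℝ) < Real.exp (Q s / h₀) := Real.exp_pos _
    have hkey : ((((A₀ + s)^2 - 1 - (ρ₁ s)^2) / h₁) - (((A₀ + s)^2 - 1 - (ρ₀ s)^2) / h₀))
        + δ s * (f s / h₀) ≤ 0 := by
      have hzero : ((((A₀ + s)^2 - 1 - (ρ₁ s)^2) / h₀) - (((A₀ + s)^2 - 1 - (ρ₀ s)^2) / h₀))
          + (ρ₁ s - ρ₀ s) * ((ρ₀ s + ρ₁ s) / h₀) = 0 := by
        field_simp
        ring
      have := h1 s hs'
      simp only [hδ_def, hfs]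
      linarith
    have hfactor : ((((A₀ + s)^2 - 1 - (ρ₁ s)^2) / h₁) - (((A₀ + s)^2 - 1 - (ρ₀ s)^2) / h₀))
          * Real.exp (Q s / h₀) + δ s * (Real.exp (Q s / h₀) * (f s / h₀))
        = (((((A₀ + s)^2 - 1 - (ρ₁ s)^2) / h₁) - (((A₀ + s)^2 - 1 - (ρ₀ s)^2) / h₀))
          + δ s * (f s / h₀)) * Real.exp (Q s / h₀) := by ring
    rw [hfactor]
    exact mul_nonpos_of_nonpos_of_nonneg hkey hE.le
  -- ψ is antitone on Ici 0
  have hψanti : AntitoneOn ψ (Ici (0:ℝ)) := by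
    apply antitoneOn_of_deriv_nonpos (convex_Ici 0)
    · intro s hs
      exact ((hψder s hs).continuousAt).continuousWithinAt
    · intro s hs
      rw [interior_Ici] at hs
      exact ((hψder s (mem_Ici.mpr (le_of_lt (mem_Ioi.mp hs)))).differentiableAt).differentiableWithinAt
    · intro s hs
      rw [interior_Ici] at hs
      exact hψ'le s hs
  have hψ0 : ψ 0 = 0 := by
    simp [hψ_def, hδ_def, hρ₀0, hρ₁0]
  -- δ ≤ 0 on Ici 0
  have hδnonpos : ∀ s ∈ Ici (0:ℝ), δ s ≤ 0 := by
    intro s hs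
    have hψs : ψ s ≤ 0 := by
      have := hψanti (self_mem_Ici) hs hs
      rwa [hψ0] at this
    have hE : (0:ℝ) < Real.exp (Q s / h₀) := Real.exp_pos _
    by_contra hpos
    push_neg at hpos
    simp only [hψ_def] at hψs
    nlinarith [mul_pos hpos hE]
  -- hence δ' ≤ 0 on Ioi 0, so δ is antitone on Ici 0
  have hδ'le : ∀ s ∈ Ioi (0:ℝ), deriv δ s ≤ 0 := by
    intro s hs
    have hs' : s ∈ Ici (0:ℝ) := mem_Ici.mpr (le_of_lt (mem_Ioi.mp hs))
    rw [(hδder s hs').deriv]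
    have hstrip := hstrip₀ s hs
    have hstrip' := hstrip₁ s hs
    have hδn := hδnonpos s hs'
    have h1' := h1 s hs'
    -- (ρ₀² - ρ₁²)/h₀ ≤ 0 since ρ₁ ≤ ρ₀ < 0
    have hsq : (ρ₀ s)^2 - (ρ₁ s)^2 ≤ 0 := by
      simp only [hδ_def] at hδn
      nlinarith
    have hdiv : ((ρ₀ s)^2 - (ρ₁ s)^2) / h₀ ≤ 0 :=
      div_nonpos_of_nonpos_of_nonneg hsq hh₀.le
    have heq : ((A₀ + s)^2 - 1 - (ρ₁ s)^2) / h₀ - ((A₀ + s)^2 - 1 - (ρ₀ s)^2) / h₀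
        = ((ρ₀ s)^2 - (ρ₁ s)^2) / h₀ := by ring
    linarith
  have hδanti : AntitoneOn δ (Ici (0:ℝ)) := by
    apply antitoneOn_of_deriv_nonpos (convex_Ici 0)
    · intro s hs
      exact ((hδder s hs).continuousAt).continuousWithinAt
    · intro s hs
      rw [interior_Ici] at hs
      exact ((hδder s (mem_Ici.mpr (le_of_lt (mem_Ioi.mp hs)))).differentiableAt).differentiableWithinAt
    · intro s hs
      rw [interior_Ici] at hs
      exact hδ'le s hs
  -- δ tends to 0 at infinity
  have hδtend : Tendsto δ atTop (nhds 0) := by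
    have := hlim₁.sub hlim₀
    rw [sub_zero] at this
    refine this.congr fun s => ?_
    simp only [hδ_def]
    ring
  -- δ ≥ 0 on Ici 0
  have hδnonneg : ∀ s ∈ Ici (0:ℝ), 0 ≤ δ s := by
    intro s hs
    refine le_of_tendsto hδtend ?_
    filter_upwards [eventually_ge_atTop s] with t ht
    exact hδanti hs (le_trans hs ht) ht
  -- so δ = 0 on Ici 0, i.e. ρ₁ = ρ₀ on Ici 0
  have hδzero : ∀ s ∈ Ici (0:ℝ), ρ₁ s = ρ₀ s := by
    intro s hs
    have := le_antisymm (hδnonpos s hs) (hδnonneg s hs)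
    simpa [hδ_def, sub_eq_zero] using this
  -- transfer the ODE for ρ₁ to ρ₀ at s = 1
  have h1mem : (1:ℝ) ∈ Ici (0:ℝ) := by norm_num
  have heq : ρ₀ =ᶠ[nhds (1:ℝ)] ρ₁ := by
    filter_upwards [Ioi_mem_nhds (show (0:ℝ) < 1 by norm_num)] with t ht
    exact (hδzero t (mem_Ici.mpr (le_of_lt (mem_Ioi.mp ht)))).symm
  have hd₁ : HasDerivAt ρ₀ (((A₀ + 1)^2 - 1 - (ρ₁ 1)^2) / h₁) 1 :=
    (hode₁ 1 h1mem).congr_of_eventuallyEq heq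
  have huniq := hd₁.unique (hode₀ 1 h1mem)
  rw [hδzero 1 h1mem] at huniq
  -- the numerator is strictly negative
  have hρ1 : ρ₀ 1 < 0 := (hstrip₀ 1 (by norm_num)).2
  have hnum : (A₀ + 1)^2 - 1 - (ρ₀ 1)^2 < 0 := by
    obtain ⟨hA1, hA2⟩ := hA
    nlinarith [mul_pos (neg_pos.mpr hρ1) (neg_pos.mpr hρ1)]
  -- but a/h₁ = a/h₀ with a < 0 and h₁ < h₀ is impossible
  field_simp at huniq
  nlinarith [mul_neg_of_neg_of_pos hnum (sub_pos.mpr hlt)]
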